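/- The number of lattice points in the dilate m·Δ of the polytope Δ = conv{(0,0), (0,1), (1,1), (3,0)} ⊂ ℝ^2 equals 2m² + 3m + 1 for every natural number m; in particular Δ is Ehrhart-equivalent to 2·Σ_2. -/

import Mathlib

open Pointwise

lemma hull_eq : convexHull ℝ {((0 : ℝ), (0 : ℝ)), (0, 1), (1, 1), (3, 0)} =
    {q : ℝ × ℝ | 0 ≤ q.1 ∧ 0 ≤ q.2 ∧ q.2 ≤ 1 ∧ q.1 + 2 * q.2 ≤ 3} := by
  apply Set.Subset.antisymm
  · apply convexHull_min
    · intro q hq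
      simp only [Set.mem_insert_iff, Set.mem_singleton_iff] at hq
      rcases hq with h | h | h | h <;> subst h <;> norm_num
    · intro x hx y hy a b ha hb hab
      simp only [Set.mem_setOf_eq] at *
      simp only [Prod.smul_fst, Prod.smul_snd, Prod.fst_add, Prod.snd_add, smul_eq_mul]
      refine ⟨by nlinarith [hx.1, hy.1], by nlinarith [hx.2.1, hy.2.1],
        by nlinarith [hx.2.2.1, hy.2.2.1], by nlinarith [hx.2.2.2, hy.2.2.2]⟩
  · intro q hq
    obtain ⟨h1, h2, h3, h4⟩ := hq
    have hconv : Convex ℝ (convexHull ℝ {((0 : ℝ), (0 : ℝ)), (0, 1), (1, 1), (3, 0)}) :=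
      convex_convexHull ℝ _
    set z : Fin 4 → ℝ × ℝ := ![(0, 0), (0, 1), (1, 1), (3, 0)] with hz
    have hzmem : ∀ i, z i ∈ convexHull ℝ {((0 : ℝ), (0 : ℝ)), (0, 1), (1, 1), (3, 0)} := by
      intro i
      apply subset_convexHull
      fin_cases i <;> simp [z]
    rcases le_total q.1 q.2 with hc | hc
    · set w : Fin 4 → ℝ := ![1 - q.2, q.2 - q.1, q.1, 0] with hw
      have := hconv.sum_mem (t := Finset.univ) (w := w) (z := z)
        (by intro i _; fin_cases i <;> simp [w] <;> linarith)
        (by simp [w, Fin.sum_univ_four])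
        (by intro i _; exact hzmem i)
      convert this using 1
      simp [w, z, Fin.sum_univ_four, Prod.ext_iff]

    · set w : Fin 4 → ℝ := ![1 - q.2 - (q.1 - q.2) / 3, 0, q.2, (q.1 - q.2) / 3] with hw
      have := hconv.sum_mem (t := Finset.univ) (w := w) (z := z)
        (by intro i _; fin_cases i <;> simp [w] <;> linarith)
        (by simp [w, Fin.sum_univ_four]; ring)
        (by intro i _; exact hzmem i)
      convert this using 1
      simp [w, z, Fin.sum_univ_four, Prod.ext_iff]


lemma key (m : ℕ) (p : ℤ × ℤ) :
    ((p.1 : ℝ), (p.2 : ℝ)) ∈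
      (m : ℝ) • convexHull ℝ {((0 : ℝ), (0 : ℝ)), (0, 1), (1, 1), (3, 0)} ↔
    0 ≤ p.1 ∧ 0 ≤ p.2 ∧ p.2 ≤ (m : ℤ) ∧ p.1 + 2 * p.2 ≤ 3 * m := by
  rcases Nat.eq_zero_or_pos m with hm | hm
  · subst hm
    rw [Nat.cast_zero, Set.zero_smul_set ⟨(0, 0), subset_convexHull _ _ (by simp)⟩]
    simp only [Set.mem_zero, Prod.ext_iff, Prod.fst_zero, Prod.snd_zero, Nat.cast_zero]
    constructor
    · rintro ⟨h1, h2⟩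
      have h1' : p.1 = 0 := by exact_mod_cast h1
      have h2' : p.2 = 0 := by exact_mod_cast h2
      omega
    · intro h
      have h1 : p.1 = 0 := by omega
      have h2 : p.2 = 0 := by omega
      rw [h1, h2]; norm_num
  · have hm' : (0 : ℝ) < m := by exact_mod_cast hm
    rw [Set.mem_smul_set_iff_inv_smul_mem₀ (ne_of_gt hm'), hull_eq]
    simp only [Set.mem_setOf_eq, Prod.smul_fst, Prod.smul_snd, smul_eq_mul, inv_mul_eq_div]
    rw [le_div_iff₀ hm', le_div_iff₀ hm', div_le_one hm']
    have h3 : (p.1 : ℝ) / m + 2 * ((p.2 : ℝ) / m) = ((p.1 : ℝ) + 2 * p.2) / m := by ring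
    rw [h3, div_le_iff₀ hm']
    constructor
    · rintro ⟨h1, h2, h3, h4⟩
      have a1 : (0 : ℝ) ≤ (p.1 : ℝ) := by linarith
      have a2 : (0 : ℝ) ≤ (p.2 : ℝ) := by linarith
      have a4 : (p.1 : ℝ) + 2 * (p.2 : ℝ) ≤ 3 * (m : ℝ) := by linarith
      exact ⟨by exact_mod_cast a1, by exact_mod_cast a2, by exact_mod_cast h3,
        by exact_mod_cast a4⟩
    · rintro ⟨h1, h2, h3, h4⟩
      have h1' : (0 : ℝ) ≤ p.1 := by exact_mod_cast h1
      have h2' : (0 : ℝ) ≤ p.2 := by exact_mod_cast h2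
      have h3' : (p.2 : ℝ) ≤ m := by exact_mod_cast h3
      have h4' : (p.1 : ℝ) + 2 * p.2 ≤ 3 * m := by exact_mod_cast h4
      refine ⟨by linarith, by linarith, h3', by linarith⟩

noncomputable def T (m : ℕ) : Finset (ℤ × ℤ) :=
  (Finset.Icc (0 : ℤ) m).biUnion
    (fun y => (Finset.Icc (0 : ℤ) (3 * m - 2 * y)).image (fun x => (x, y)))

lemma mem_T (m : ℕ) (p : ℤ × ℤ) :
    p ∈ T m ↔ 0 ≤ p.1 ∧ 0 ≤ p.2 ∧ p.2 ≤ (m : ℤ) ∧ p.1 + 2 * p.2 ≤ 3 * m := by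
  simp only [T, Finset.mem_biUnion, Finset.mem_image, Finset.mem_Icc]
  constructor
  · rintro ⟨y, ⟨hy0, hy1⟩, x, ⟨hx0, hx1⟩, rfl⟩
    exact ⟨hx0, hy0, hy1, by omega⟩
  · rintro ⟨h1, h2, h3, h4⟩
    exact ⟨p.2, ⟨h2, h3⟩, p.1, ⟨h1, by omega⟩, rfl⟩

lemma card_T (m : ℕ) : (T m).card = 2 * m ^ 2 + 3 * m + 1 := by
  rw [T, Finset.card_biUnion]
  · have step1 : ∀ y ∈ Finset.Icc (0 : ℤ) (m : ℤ),
        ((Finset.Icc (0 : ℤ) (3 * m - 2 * y)).image (fun x => (x, y))).card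
          = (3 * m - 2 * y + 1).toNat := by
      intro y _
      rw [Finset.card_image_of_injective _ (fun a b h => (Prod.mk.injEq _ _ _ _).mp h |>.1),
        Int.card_Icc]
      congr 1; ring
    rw [Finset.sum_congr rfl step1]
    have step2 : ∑ y ∈ Finset.Icc (0 : ℤ) (m : ℤ), (3 * (m : ℤ) - 2 * y + 1).toNat
        = ∑ k ∈ Finset.range (m + 1), ((3 * (m : ℤ) - 2 * k + 1).toNat) := by
      refine Finset.sum_nbij' (fun y => y.toNat) (fun k => (k : ℤ)) ?_ ?_ ?_ ?_ ?_
      · intro y hy; simp only [Finset.mem_Icc] at hy; simp only [Finset.mem_range]; omega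
      · intro k hk; simp only [Finset.mem_range] at hk; simp only [Finset.mem_Icc]; omega
      · intro y hy; simp only [Finset.mem_Icc] at hy; omega
      · intro k _; simp
      · intro y hy; simp only [Finset.mem_Icc] at hy
        congr 2; omega
    rw [step2]
    have step3 : ∑ k ∈ Finset.range (m + 1), ((3 * (m : ℤ) - 2 * k + 1).toNat)
        = ∑ k ∈ Finset.range (m + 1), (m + 1 + 2 * k) := by
      rw [← Finset.sum_range_reflect]
      apply Finset.sum_congr rfl
      intro k hk
      simp only [Finset.mem_range] at hk
      have : ((m + 1 - 1 - k : ℕ) : ℤ) = (m : ℤ) - k := by omega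
      rw [this]
      omega
    rw [step3, Finset.sum_add_distrib, Finset.sum_const, Finset.card_range, smul_eq_mul,
      ← Finset.mul_sum]
    have g := Finset.sum_range_id_mul_two (m + 1)
    simp only [Nat.add_sub_cancel] at g
    nlinarith [g]
  · intro y hy z hz hyz
    rw [Function.onFun, Finset.disjoint_left]
    rintro a ha hb
    simp only [Finset.mem_image] at ha hb
    obtain ⟨x, _, rfl⟩ := ha
    obtain ⟨x', _, h⟩ := hb
    exact hyz ((Prod.mk.injEq _ _ _ _).mp h).2.symm

/-- The polytope `conv{(0,0),(0,1),(1,1),(3,0)}` has Ehrhart polynomial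
`2m² + 3m + 1`, i.e. it is Ehrhart equivalent to `2 • Σ_2`. -/
theorem ehrhart_hirzebruch_polytope (m : ℕ) :
    Nat.card {p : ℤ × ℤ //
        ((p.1 : ℝ), (p.2 : ℝ)) ∈
          (m : ℝ) • convexHull ℝ {((0 : ℝ), (0 : ℝ)), (0, 1), (1, 1), (3, 0)}} =
      2 * m ^ 2 + 3 * m + 1 := by
  have hset : {p : ℤ × ℤ |
      ((p.1 : ℝ), (p.2 : ℝ)) ∈
        (m : ℝ) • convexHull ℝ {((0 : ℝ), (0 : ℝ)), (0, 1), (1, 1), (3, 0)}}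
      = ↑(T m) := by
    ext p
    rw [Set.mem_setOf_eq, key, Finset.mem_coe, mem_T]
  calc Nat.card {p : ℤ × ℤ //
        ((p.1 : ℝ), (p.2 : ℝ)) ∈
          (m : ℝ) • convexHull ℝ {((0 : ℝ), (0 : ℝ)), (0, 1), (1, 1), (3, 0)}}
      = {p : ℤ × ℤ |
        ((p.1 : ℝ), (p.2 : ℝ)) ∈
          (m : ℝ) • convexHull ℝ {((0 : ℝ), (0 : ℝ)), (0, 1), (1, 1), (3, 0)}}.ncard :=
        Nat.card_coe_set_eq _
    _ = (T m).card := by rw [hset, Set.ncard_coe_finset]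
    _ = 2 * m ^ 2 + 3 * m + 1 := card_T m
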